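/- Let H_R be a subspace of H_S ⊗ H_E with dim H_R = d_R, dim H_S = d_S, let E_R = 𝟙_R / d_R be the maximally mixed state on H_R, and Ω_E = Tr_S(E_R). Then Tr(Ω_E²) ≤ d_S / d_R. -/

import Mathlib

open Matrix MeasureTheory
open scoped ComplexOrder Kronecker

/-- The trace norm `‖M‖₁ = Tr √(M†M)` of a complex matrix. -/
noncomputable def traceNorm {n : Type*} [Fintype n] [DecidableEq n]
    (M : Matrix n n ℂ) : ℝ :=
  ((Matrix.posSemidef_conjTranspose_mul_self M).1.eigenvectorUnitary.1 *
    diagonal (((↑) : ℝ → ℂ) ∘ (√·) ∘ (Matrix.posSemidef_conjTranspose_mul_self M).1.eigenvalues) *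
    (star (Matrix.posSemidef_conjTranspose_mul_self M).1.eigenvectorUnitary : Matrix n n ℂ)).trace.re

/-- The Hilbert–Schmidt norm `‖M‖₂ = √(Tr (M†M))`. -/
noncomputable def hsNorm {n : Type*} [Fintype n] (M : Matrix n n ℂ) : ℝ :=
  Real.sqrt ((Mᴴ * M).trace.re)

/-- Euclidean norm of a vector. -/
noncomputable def vnorm {n : Type*} [Fintype n] (φ : n → ℂ) : ℝ :=
  Real.sqrt (∑ i, Complex.normSq (φ i))

/-- Inner product `⟨φ|ψ⟩`. -/
noncomputable def cinner {n : Type*} [Fintype n] (φ ψ : n → ℂ) : ℂ := ∑ i, star (φ i) * ψ i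

/-- Outer product `|φ⟩⟨φ|`. -/
noncomputable def outer {n : Type*} (φ : n → ℂ) : Matrix n n ℂ :=
  Matrix.of fun i j => φ i * star (φ j)

/-- Partial trace over the environment (second factor). -/
noncomputable def ptraceE {dS dE : ℕ} (M : Matrix (Fin dS × Fin dE) (Fin dS × Fin dE) ℂ) :
    Matrix (Fin dS) (Fin dS) ℂ :=
  Matrix.of fun s s' => ∑ e, M (s, e) (s', e)

/-- Partial trace over the system (first factor). -/
noncomputable def ptraceS {dS dE : ℕ} (M : Matrix (Fin dS × Fin dE) (Fin dS × Fin dE) ℂ) :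
    Matrix (Fin dE) (Fin dE) ℂ :=
  Matrix.of fun e e' => ∑ s, M (s, e) (s, e')

/-- The swap (flip) operator `F(|a⟩⊗|b⟩) = |b⟩⊗|a⟩` as a matrix. -/
noncomputable def swapMatrix (d : ℕ) : Matrix (Fin d × Fin d) (Fin d × Fin d) ℂ :=
  Matrix.of fun p q => if p.1 = q.2 ∧ p.2 = q.1 then 1 else 0

/-- `μ` is the uniform (Haar, unitarily invariant) probability measure on the unit
sphere of the subspace given by the orthogonal projection `P`: it is a probability
measure, concentrated on unit vectors of the range of `P`, and invariant under every
unitary commuting with `P` (i.e. preserving the subspace). -/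
def IsUniformOnSphere {ι : Type*} [Fintype ι] [DecidableEq ι]
    (P : Matrix ι ι ℂ) (μ : Measure (ι → ℂ)) : Prop :=
  IsProbabilityMeasure μ ∧
  μ {φ | P.mulVec φ = φ ∧ vnorm φ = 1} = 1 ∧
  ∀ U ∈ Matrix.unitaryGroup ι ℂ, U * P = P * U →
    Measure.map (fun φ => U.mulVec φ) μ = μ

lemma ptraceS_posSemidef {dS dE : ℕ} {M : Matrix (Fin dS × Fin dE) (Fin dS × Fin dE) ℂ}
    (hM : M.PosSemidef) : (ptraceS M).PosSemidef := by
  refine Matrix.PosSemidef.of_dotProduct_mulVec_nonneg ?_ ?_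
  · ext e e'
    simp only [ptraceS, Matrix.conjTranspose_apply, Matrix.of_apply, star_sum]
    exact Finset.sum_congr rfl fun s _ => by rw [← Matrix.conjTranspose_apply, hM.1]
  · intro x
    have hterm : ∀ s : Fin dS,
        star (fun p : Fin dS × Fin dE => if p.1 = s then x p.2 else 0) ⬝ᵥ
          M.mulVec (fun p : Fin dS × Fin dE => if p.1 = s then x p.2 else 0)
        = ∑ e, ∑ e', star (x e) * (M (s, e) (s, e') * x e') := by
      intro s
      simp only [dotProduct, mulVec, Pi.star_apply, Fintype.sum_prod_type, apply_ite star,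
        star_zero, ite_mul, zero_mul, mul_ite, mul_zero, Finset.sum_ite_irrel,
        Finset.sum_ite_eq', Finset.sum_const_zero, Finset.mem_univ, if_true, Finset.mul_sum]
    have sum_rot : ∀ (f : Fin dE → Fin dE → Fin dS → ℂ),
        ∑ a, ∑ b, ∑ c, f a b c = ∑ c, ∑ b, ∑ a, f a b c := by
      intro f
      calc ∑ a, ∑ b, ∑ c, f a b c = ∑ b, ∑ a, ∑ c, f a b c := Finset.sum_comm
        _ = ∑ b, ∑ c, ∑ a, f a b c := Finset.sum_congr rfl fun b _ => Finset.sum_comm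
        _ = ∑ c, ∑ b, ∑ a, f a b c := Finset.sum_comm
    have key : star x ⬝ᵥ (ptraceS M).mulVec x
        = ∑ s : Fin dS, star (fun p : Fin dS × Fin dE => if p.1 = s then x p.2 else 0) ⬝ᵥ
            M.mulVec (fun p : Fin dS × Fin dE => if p.1 = s then x p.2 else 0) := by
      rw [show (∑ s : Fin dS, star (fun p : Fin dS × Fin dE => if p.1 = s then x p.2 else 0) ⬝ᵥ
            M.mulVec (fun p : Fin dS × Fin dE => if p.1 = s then x p.2 else 0))
          = ∑ s : Fin dS, ∑ e, ∑ e', star (x e) * (M (s, e) (s, e') * x e') from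
        Finset.sum_congr rfl fun s _ => hterm s]
      simp only [dotProduct, mulVec, ptraceS, Matrix.of_apply, Pi.star_apply,
        Finset.mul_sum, Finset.sum_mul]
      rw [sum_rot]
      exact Finset.sum_congr rfl fun c _ => Finset.sum_comm
    rw [key]
    exact Finset.sum_nonneg fun s _ => hM.dotProduct_mulVec_nonneg _

lemma trace_nonneg_of_psd {n : Type*} [Fintype n] [DecidableEq n] {A : Matrix n n ℂ}
    (hA : A.PosSemidef) : 0 ≤ A.trace := by
  rw [Matrix.trace]
  refine Finset.sum_nonneg fun i _ => ?_
  have := hA.dotProduct_mulVec_nonneg (Pi.single i 1)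
  simpa [dotProduct, mulVec, Pi.single_apply] using this

open scoped MatrixOrder in
lemma trace_mul_nonneg_of_psd {n : Type*} [Fintype n] [DecidableEq n] {A B : Matrix n n ℂ}
    (hA : A.PosSemidef) (hB : B.PosSemidef) : 0 ≤ (A * B).trace := by
  have h1 : A = CFC.sqrt A * CFC.sqrt A := (CFC.sqrt_mul_sqrt_self A hA.nonneg).symm
  have h2 : (A * B).trace = (CFC.sqrt A * B * CFC.sqrt A).trace := by
    conv_lhs => rw [h1]
    rw [Matrix.mul_assoc, Matrix.trace_mul_comm]
  rw [h2]
  have h3 : (CFC.sqrt A * B * CFC.sqrt A).PosSemidef := by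
    have := hB.mul_mul_conjTranspose_same (CFC.sqrt A)
    rwa [(CFC.sqrt_nonneg A).posSemidef.1.eq] at this
  exact trace_nonneg_of_psd h3

/-- For a subspace `H_R ⊆ H_S ⊗ H_E` with projector `P` of rank `d_R`,
`E_R = P/d_R`, `Ω_E = Tr_S E_R`: one has `Tr(Ω_E²) ≤ d_S/d_R`. -/
theorem trace_omegaE_sq_le (dS dE dR : ℕ) (hdR : 0 < dR)
    (P : Matrix (Fin dS × Fin dE) (Fin dS × Fin dE) ℂ)
    (hP1 : P.IsHermitian) (hP2 : P * P = P) (hP3 : P.trace = dR) :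
    ((ptraceS ((dR : ℂ)⁻¹ • P) * ptraceS ((dR : ℂ)⁻¹ • P)).trace).re
      ≤ (dS : ℝ) / dR := by
  set Q := ptraceS P with hQdef
  -- P is PSD
  have hPpsd : P.PosSemidef := by
    have h := Matrix.posSemidef_conjTranspose_mul_self P
    rwa [hP1.eq, hP2] at h
  -- 1 - P is PSD
  have h1Ppsd : (1 - P).PosSemidef := by
    have h := Matrix.posSemidef_conjTranspose_mul_self (1 - P)
    have hherm : (1 - P)ᴴ = 1 - P := by
      rw [Matrix.conjTranspose_sub, Matrix.conjTranspose_one, hP1.eq]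
    have hidem : (1 - P) * (1 - P) = 1 - P := by
      rw [Matrix.sub_mul, Matrix.mul_sub, Matrix.mul_sub, hP2]
      simp
    rwa [hherm, hidem] at h
  have hQ : Q.PosSemidef := ptraceS_posSemidef hPpsd
  have hR : (ptraceS (1 - P)).PosSemidef := ptraceS_posSemidef h1Ppsd
  have hRQ : ptraceS (1 - P) = (dS : ℂ) • 1 - Q := by
    ext e e'
    simp only [ptraceS, Matrix.of_apply, Matrix.sub_apply, Matrix.smul_apply,
      Matrix.one_apply, Finset.sum_sub_distrib, hQdef, smul_eq_mul, Prod.mk.injEq]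
    congr 1
    by_cases h : e = e' <;> simp [h, Finset.sum_ite_eq]
  -- trace of Q is dR
  have hQtr : Q.trace = (dR : ℂ) := by
    rw [← hP3, Matrix.trace, Matrix.trace, Fintype.sum_prod_type]
    rw [Finset.sum_comm]
    rfl
  -- key inequality
  have hkey : 0 ≤ (Q * ((dS : ℂ) • 1 - Q)).trace := by
    rw [← hRQ]; exact trace_mul_nonneg_of_psd hQ hR
  have hexp : (Q * ((dS : ℂ) • 1 - Q)).trace = (dS : ℂ) * (dR : ℂ) - (Q * Q).trace := by
    rw [Matrix.mul_sub, Matrix.trace_sub, Matrix.mul_smul, Matrix.mul_one,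
      Matrix.trace_smul, hQtr, smul_eq_mul]
  rw [hexp] at hkey
  have hre : (Q * Q).trace.re ≤ (dS : ℝ) * (dR : ℝ) := by
    have h := (Complex.le_def.mp hkey).1
    have e1 : ((dS : ℂ) * (dR : ℂ) - (Q * Q).trace).re
        = (dS : ℝ) * (dR : ℝ) - (Q * Q).trace.re := by
      simp [Complex.sub_re, Complex.mul_re]
    rw [e1, Complex.zero_re] at h
    linarith
  -- scaling
  have hscale : ptraceS ((dR : ℂ)⁻¹ • P) = (dR : ℂ)⁻¹ • Q := by
    ext e e'
    simp [ptraceS, hQdef, Finset.mul_sum]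
  rw [hscale]
  have : ((dR : ℂ)⁻¹ • Q * (dR : ℂ)⁻¹ • Q).trace
      = Complex.ofReal ((dR : ℝ)⁻¹) * (Complex.ofReal ((dR : ℝ)⁻¹) * (Q * Q).trace) := by
    rw [Matrix.smul_mul, Matrix.mul_smul, Matrix.trace_smul, Matrix.trace_smul]
    simp only [smul_eq_mul]
    push_cast
    ring
  rw [this, Complex.re_ofReal_mul, Complex.re_ofReal_mul]
  have hdR' : (0 : ℝ) < dR := by exact_mod_cast hdR
  rw [div_eq_mul_inv]
  calc (dR : ℝ)⁻¹ * ((dR : ℝ)⁻¹ * (Q * Q).trace.re)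
      ≤ (dR : ℝ)⁻¹ * ((dR : ℝ)⁻¹ * ((dS : ℝ) * dR)) := by
        apply mul_le_mul_of_nonneg_left _ (by positivity)
        apply mul_le_mul_of_nonneg_left hre (by positivity)
    _ = (dS : ℝ) * (dR : ℝ)⁻¹ := by field_simp
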